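/- Let A ∈ ℝ^{n×d} with n ≤ d have full row rank and SVD A = UΣVᵀ, with V = [V₁ V₂] where V₁ consists of the first n columns. If α‖A‖² < 2, then for any initial guess y₀, the gradient descent iterates y_{k+1} = y_k − αAᵀ(Ay_k − b) converge, and the limit is y_∞ = V₂V₂ᵀy₀ + θ*, where θ* = Aᵀ(AAᵀ)⁻¹b. -/

import Mathlib

open Matrix Filter

noncomputable def l2OpNorm {m p : ℕ} (M : Matrix (Fin m) (Fin p) ℝ) : ℝ :=
  ‖LinearMap.toContinuousLinearMap (Matrix.toEuclideanLin M)‖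

open scoped Matrix.Norms.L2Operator in
lemma l2OpNorm_mulVec_le {m p : ℕ} (M : Matrix (Fin m) (Fin p) ℝ)
    (x : EuclideanSpace ℝ (Fin p)) :
    ‖(EuclideanSpace.equiv (Fin m) ℝ).symm (M.mulVec x)‖ ≤ l2OpNorm M * ‖x‖ :=
  M.l2_opNorm_mulVec x

theorem stmt_3 {n d : ℕ} (hnd : n ≤ d) (A : Matrix (Fin n) (Fin d) ℝ)
    (hrank : A.rank = n) (b : Fin n → ℝ) (α : ℝ) (hα : 0 < α)
    (U : Matrix (Fin n) (Fin n) ℝ) (S : Matrix (Fin n) (Fin d) ℝ)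
    (V : Matrix (Fin d) (Fin d) ℝ)
    (hU : U * Uᵀ = 1) (hV : V * Vᵀ = 1)
    (hSVD : A = U * S * Vᵀ)
    (hSdiag : ∀ (i : Fin n) (j : Fin d), (i : ℕ) ≠ (j : ℕ) → S i j = 0)
    (hSpos : ∀ i : Fin n, 0 < S i ⟨(i : ℕ), lt_of_lt_of_le i.isLt hnd⟩)
    (V₂ : Matrix (Fin d) (Fin (d - n)) ℝ)
    (hV₂ : ∀ (i : Fin d) (j : Fin (d - n)), V₂ i j = V i ⟨n + (j : ℕ), by omega⟩)
    (hstepsize : α * l2OpNorm A ^ 2 < 2)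
    (y : ℕ → Fin d → ℝ)
    (hstep : ∀ k, y (k + 1) = y k - α • Aᵀ.mulVec (A.mulVec (y k) - b)) :
    Tendsto y atTop
      (nhds ((V₂ * V₂ᵀ).mulVec (y 0) + Aᵀ.mulVec ((A * Aᵀ)⁻¹.mulVec b))) := by
  classical
  have hUo : Uᵀ * U = 1 := mul_eq_one_comm.mp hU
  have hVo : Vᵀ * V = 1 := mul_eq_one_comm.mp hV
  -- squared singular values, extended by 0
  set g : Fin d → ℝ := fun j =>
    if h : (j : ℕ) < n then S ⟨j, h⟩ j ^ 2 else 0 with hg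
  have hgnn : ∀ j, 0 ≤ g j := by
    intro j
    rw [hg]
    dsimp only
    split
    · positivity
    · exact le_refl 0
  -- Sᵀ * S is diagonal with entries g
  have hStS : Sᵀ * S = diagonal g := by
    ext j k
    simp only [Matrix.mul_apply, Matrix.transpose_apply, Matrix.diagonal_apply]
    by_cases hjk : j = k
    · subst hjk
      rw [if_pos rfl, hg]
      dsimp only
      split_ifs with h
      · rw [Finset.sum_eq_single (⟨(j : ℕ), h⟩ : Fin n), sq]
        · intro i _ hi
          rw [hSdiag i j (fun he => hi (Fin.ext he)), zero_mul]
        · intro hmem; exact absurd (Finset.mem_univ _) hmem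
      · apply Finset.sum_eq_zero
        intro i _
        rw [hSdiag i j (by have := i.isLt; omega), zero_mul]
    · rw [if_neg hjk]
      apply Finset.sum_eq_zero
      intro i _
      rcases eq_or_ne ((i : ℕ)) ((j : ℕ)) with he | he
      · have hik : (i : ℕ) ≠ (k : ℕ) := by
          intro hk; apply hjk; apply Fin.ext; omega
        rw [hSdiag i k hik, mul_zero]
      · rw [hSdiag i j he, zero_mul]
  -- S * Sᵀ is diagonal
  have hSSt : S * Sᵀ = diagonal (fun i : Fin n => S i ⟨i, lt_of_lt_of_le i.isLt hnd⟩ ^ 2) := by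
    ext i k
    simp only [Matrix.mul_apply, Matrix.transpose_apply, Matrix.diagonal_apply]
    by_cases hik : i = k
    · subst hik
      rw [if_pos rfl]
      rw [Finset.sum_eq_single (⟨(i : ℕ), lt_of_lt_of_le i.isLt hnd⟩ : Fin d), sq]
      · intro j _ hj
        rw [hSdiag i j (fun he => hj (Fin.ext he.symm)), zero_mul]
      · intro hmem; exact absurd (Finset.mem_univ _) hmem
    · rw [if_neg hik]
      apply Finset.sum_eq_zero
      intro j _
      rcases eq_or_ne ((i : ℕ)) ((j : ℕ)) with he | he
      · have hkj : (k : ℕ) ≠ (j : ℕ) := by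
          intro hk; apply hik; apply Fin.ext; omega
        rw [hSdiag k j hkj, mul_zero]
      · rw [hSdiag i j he, zero_mul]
  -- A * Aᵀ is invertible
  set Dg : Matrix (Fin n) (Fin n) ℝ :=
    diagonal (fun i : Fin n => S i ⟨i, lt_of_lt_of_le i.isLt hnd⟩ ^ 2) with hDg
  set Dg' : Matrix (Fin n) (Fin n) ℝ :=
    diagonal (fun i : Fin n => (S i ⟨i, lt_of_lt_of_le i.isLt hnd⟩ ^ 2)⁻¹) with hDg'
  have hAAT : A * Aᵀ = U * Dg * Uᵀ := by
    rw [hSVD]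
    have h1 : (U * S * Vᵀ)ᵀ = V * Sᵀ * Uᵀ := by
      simp [Matrix.transpose_mul, Matrix.mul_assoc]
    rw [h1, ← hSSt]
    calc U * S * Vᵀ * (V * Sᵀ * Uᵀ) = U * S * (Vᵀ * V) * Sᵀ * Uᵀ := by
          simp only [Matrix.mul_assoc]
      _ = U * (S * Sᵀ) * Uᵀ := by rw [hVo]; simp only [Matrix.mul_one, Matrix.mul_assoc]
  have hDgDg' : Dg * Dg' = 1 := by
    rw [hDg, hDg', diagonal_mul_diagonal]
    have h2 : (fun i : Fin n => S i ⟨i, lt_of_lt_of_le i.isLt hnd⟩ ^ 2 *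
        (S i ⟨i, lt_of_lt_of_le i.isLt hnd⟩ ^ 2)⁻¹) = fun _ => (1:ℝ) := by
      funext i
      exact mul_inv_cancel₀ (by have := hSpos i; positivity)
    rw [h2, diagonal_one]
  have hAATinv : (A * Aᵀ) * (A * Aᵀ)⁻¹ = 1 := by
    have hrinv : (A * Aᵀ) * (U * Dg' * Uᵀ) = 1 := by
      rw [hAAT]
      calc U * Dg * Uᵀ * (U * Dg' * Uᵀ)
          = U * (Dg * ((Uᵀ * U) * (Dg' * Uᵀ))) := by simp only [Matrix.mul_assoc]
        _ = U * ((Dg * Dg') * Uᵀ) := by rw [hUo, Matrix.one_mul, Matrix.mul_assoc]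
        _ = 1 := by rw [hDgDg', Matrix.one_mul, hU]
    exact Matrix.mul_nonsing_inv _ (Matrix.isUnit_det_of_right_inverse hrinv)
  -- the limit
  set θ : Fin d → ℝ := Aᵀ.mulVec ((A * Aᵀ)⁻¹.mulVec b) with hθ
  set L : Fin d → ℝ := (V₂ * V₂ᵀ).mulVec (y 0) + θ with hL
  -- A * V₂ = 0
  have hE : Vᵀ * V₂ = Matrix.of (fun (i : Fin d) (j : Fin (d - n)) =>
      if (i : ℕ) = n + (j : ℕ) then (1:ℝ) else 0) := by
    ext i j
    have hj : n + (j : ℕ) < d := by have := j.isLt; omega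
    have h1 : (Vᵀ * V₂) i j = (Vᵀ * V) i ⟨n + (j : ℕ), hj⟩ := by
      simp only [Matrix.mul_apply, Matrix.transpose_apply]
      refine Finset.sum_congr rfl fun m _ => ?_
      rw [hV₂ m j]
    rw [h1, hVo, Matrix.one_apply, Matrix.of_apply]
    by_cases hc : (i : ℕ) = n + (j : ℕ)
    · rw [if_pos (Fin.ext hc), if_pos hc]
    · rw [if_neg (fun he => hc (by rw [he])), if_neg hc]
  have hAV₂ : A * V₂ = 0 := by
    have hSE : S * (Vᵀ * V₂) = 0 := by
      ext i j
      rw [Matrix.mul_apply, Matrix.zero_apply]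
      apply Finset.sum_eq_zero
      intro t _
      rw [hE, Matrix.of_apply]
      by_cases hc : (t : ℕ) = n + (j : ℕ)
      · rw [if_pos hc, mul_one, hSdiag i t (by have := i.isLt; omega)]
      · rw [if_neg hc, mul_zero]
    rw [hSVD]
    calc U * S * Vᵀ * V₂ = U * (S * (Vᵀ * V₂)) := by simp only [Matrix.mul_assoc]
      _ = 0 := by rw [hSE, Matrix.mul_zero]
  -- fixed point equation
  have hfix : (Aᵀ * A).mulVec L = Aᵀ.mulVec b := by
    rw [hL, Matrix.mulVec_add]
    have h1 : (Aᵀ * A).mulVec ((V₂ * V₂ᵀ).mulVec (y 0)) = 0 := by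
      rw [Matrix.mulVec_mulVec]
      have h0 : Aᵀ * A * (V₂ * V₂ᵀ) = 0 := by
        calc Aᵀ * A * (V₂ * V₂ᵀ) = Aᵀ * ((A * V₂) * V₂ᵀ) := by simp only [Matrix.mul_assoc]
          _ = 0 := by rw [hAV₂, Matrix.zero_mul, Matrix.mul_zero]
      rw [h0, Matrix.zero_mulVec]
    have h2 : (Aᵀ * A).mulVec θ = Aᵀ.mulVec b := by
      rw [hθ, Matrix.mulVec_mulVec, Matrix.mulVec_mulVec]
      have h3 : Aᵀ * A * Aᵀ * (A * Aᵀ)⁻¹ = Aᵀ := by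
        calc Aᵀ * A * Aᵀ * (A * Aᵀ)⁻¹ = Aᵀ * ((A * Aᵀ) * (A * Aᵀ)⁻¹) := by
              simp only [Matrix.mul_assoc]
          _ = Aᵀ := by rw [hAATinv, Matrix.mul_one]
      rw [h3]
    rw [h1, h2, zero_add]
  -- the iteration matrix
  set P : Matrix (Fin d) (Fin d) ℝ := 1 - α • (Aᵀ * A) with hPdef
  have hstep' : ∀ k, y (k + 1) = P.mulVec (y k) + α • Aᵀ.mulVec b := by
    intro k
    rw [hstep k, hPdef, Matrix.sub_mulVec, Matrix.one_mulVec, Matrix.smul_mulVec,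
      Matrix.mulVec_sub, Matrix.mulVec_mulVec, smul_sub]
    abel
  set w : Fin d → ℝ := y 0 - L with hw
  have hclosed : ∀ k, y k = (P ^ k).mulVec w + L := by
    intro k
    induction k with
    | zero =>
      rw [pow_zero, Matrix.one_mulVec, hw]
      abel
    | succ k ih =>
      rw [hstep' k, ih, Matrix.mulVec_add, Matrix.mulVec_mulVec]
      have hfp : P.mulVec L + α • Aᵀ.mulVec b = L := by
        rw [hPdef, Matrix.sub_mulVec, Matrix.one_mulVec, Matrix.smul_mulVec, hfix]
        abel
      have hpp : P * P ^ k = P ^ (k + 1) := (pow_succ' P k).symm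
      rw [hpp, add_assoc, hfp]
  -- eigen-decomposition of P
  set lam : Fin d → ℝ := fun j => 1 - α * g j with hlamdef
  have hdl : diagonal lam = 1 - α • diagonal g := by
    ext i j
    by_cases hij : i = j
    · subst hij
      simp [hlamdef, Matrix.diagonal_apply_eq, Matrix.one_apply_eq]
    · simp [Matrix.diagonal_apply_ne _ hij, Matrix.one_apply_ne hij]
  have hATA : Aᵀ * A = V * diagonal g * Vᵀ := by
    rw [hSVD]
    have h1 : (U * S * Vᵀ)ᵀ = V * Sᵀ * Uᵀ := by
      simp [Matrix.transpose_mul, Matrix.mul_assoc]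
    rw [h1, ← hStS]
    calc V * Sᵀ * Uᵀ * (U * S * Vᵀ) = V * Sᵀ * (Uᵀ * U) * S * Vᵀ := by
          simp only [Matrix.mul_assoc]
      _ = V * (Sᵀ * S) * Vᵀ := by rw [hUo]; simp only [Matrix.mul_one, Matrix.mul_assoc]
  have hP : P = V * diagonal lam * Vᵀ := by
    rw [hPdef, hATA, hdl, Matrix.mul_sub, Matrix.sub_mul, Matrix.mul_one, hV,
      Matrix.mul_smul, Matrix.smul_mul, Matrix.mul_assoc]
  have hPk : ∀ k, P ^ k = V * diagonal (fun j => lam j ^ k) * Vᵀ := by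
    intro k
    induction k with
    | zero =>
      rw [pow_zero]
      have h0 : (fun j : Fin d => lam j ^ 0) = fun _ => (1:ℝ) := by
        funext j; rw [pow_zero]
      rw [h0, diagonal_one, Matrix.mul_one, hV]
    | succ k ih =>
      rw [pow_succ, ih, hP]
      calc V * diagonal (fun j => lam j ^ k) * Vᵀ * (V * diagonal lam * Vᵀ)
          = V * (diagonal (fun j => lam j ^ k) * ((Vᵀ * V) * (diagonal lam * Vᵀ))) := by
            simp only [Matrix.mul_assoc]
        _ = V * (diagonal (fun j => lam j ^ k) * diagonal lam) * Vᵀ := by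
            rw [hVo, Matrix.one_mul]; simp only [Matrix.mul_assoc]
        _ = V * diagonal (fun j => lam j ^ (k + 1)) * Vᵀ := by
            rw [diagonal_mul_diagonal]
            have hfun : (fun j => lam j ^ k * lam j) = fun j => lam j ^ (k + 1) := by
              funext j; rw [← pow_succ]
            rw [hfun]
  -- coordinates of w vanish in the tail
  set z : Fin d → ℝ := Vᵀ.mulVec w with hz
  have hAVt : Vᵀ * Aᵀ = Sᵀ * Uᵀ := by
    rw [hSVD]
    have h1 : (U * S * Vᵀ)ᵀ = V * Sᵀ * Uᵀ := by
      simp [Matrix.transpose_mul, Matrix.mul_assoc]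
    rw [h1]
    calc Vᵀ * (V * Sᵀ * Uᵀ) = (Vᵀ * V) * (Sᵀ * Uᵀ) := by simp only [Matrix.mul_assoc]
      _ = Sᵀ * Uᵀ := by rw [hVo, Matrix.one_mul]
  have hztail : ∀ j : Fin d, n ≤ (j : ℕ) → z j = 0 := by
    intro j hj
    have c1 : (Vᵀ.mulVec ((V₂ * V₂ᵀ).mulVec (y 0))) j = (Vᵀ.mulVec (y 0)) j := by
      rw [Matrix.mulVec_mulVec]
      have hrow : ∀ m, (Vᵀ * (V₂ * V₂ᵀ)) j m = Vᵀ j m := by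
        intro m
        have hassoc : Vᵀ * (V₂ * V₂ᵀ) = (Vᵀ * V₂) * V₂ᵀ := by rw [Matrix.mul_assoc]
        rw [hassoc, hE, Matrix.mul_apply]
        have hjn : (j : ℕ) - n < d - n := by have := j.isLt; omega
        rw [Finset.sum_eq_single (⟨(j : ℕ) - n, hjn⟩ : Fin (d - n))]
        · rw [Matrix.of_apply, if_pos (show (j : ℕ) = n + ((j : ℕ) - n) by omega), one_mul,
            Matrix.transpose_apply, hV₂, Matrix.transpose_apply]
          congr 1
          apply Fin.ext
          simp only
          omega
        · intro t _ ht
          rw [Matrix.of_apply, if_neg, zero_mul]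
          intro hc
          apply ht
          apply Fin.ext
          simp only
          omega
        · intro hmem; exact absurd (Finset.mem_univ _) hmem
      simp only [Matrix.mulVec, dotProduct]
      exact Finset.sum_congr rfl fun m _ => by rw [hrow m]
    have c2 : (Vᵀ.mulVec θ) j = 0 := by
      rw [hθ, Matrix.mulVec_mulVec]
      have hrow0 : ∀ i, (Vᵀ * Aᵀ) j i = 0 := by
        intro i
        rw [hAVt, Matrix.mul_apply]
        apply Finset.sum_eq_zero
        intro t _
        rw [Matrix.transpose_apply, hSdiag t j (by have := t.isLt; omega), zero_mul]
      simp only [Matrix.mulVec, dotProduct]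
      apply Finset.sum_eq_zero
      intro i _
      rw [hrow0 i, zero_mul]
    rw [hz, hw, hL, Matrix.mulVec_sub, Matrix.mulVec_add]
    simp only [Pi.sub_apply, Pi.add_apply]
    rw [c1, c2]
    ring
  -- singular values are bounded by the operator norm
  have hσle : ∀ i : Fin n, S i ⟨i, lt_of_lt_of_le i.isLt hnd⟩ ≤ l2OpNorm A := by
    intro i
    set jd : Fin d := ⟨i, lt_of_lt_of_le i.isLt hnd⟩ with hjd
    set v : EuclideanSpace ℝ (Fin d) := WithLp.toLp 2 (fun m => V m jd) with hv
    have hAV : A * V = U * S := by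
      rw [hSVD]
      calc U * S * Vᵀ * V = U * S * (Vᵀ * V) := by rw [Matrix.mul_assoc]
        _ = U * S := by rw [hVo, Matrix.mul_one]
    have hAv : A.mulVec v = fun t => U t i * S i jd := by
      funext t
      have h1 : A.mulVec v t = (A * V) t jd := by
        simp only [Matrix.mulVec, dotProduct, Matrix.mul_apply, hv, WithLp.ofLp_toLp]
      rw [h1, hAV, Matrix.mul_apply, Finset.sum_eq_single i]
      · intro s _ hs
        rw [hSdiag s jd (fun he => hs (Fin.ext (by rw [he, hjd]))), mul_zero]
      · intro hmem; exact absurd (Finset.mem_univ _) hmem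
    have hnv : ‖v‖ = 1 := by
      rw [EuclideanSpace.norm_eq]
      have h1 : (∑ m, ‖v m‖ ^ 2) = (Vᵀ * V) jd jd := by
        rw [Matrix.mul_apply]
        refine Finset.sum_congr rfl fun m _ => ?_
        rw [Matrix.transpose_apply, hv, PiLp.toLp_apply]
        rw [Real.norm_eq_abs, sq_abs, sq]
      rw [h1, hVo, Matrix.one_apply_eq, Real.sqrt_one]
    have hnAv : ‖(EuclideanSpace.equiv (Fin n) ℝ).symm (A.mulVec v)‖ = S i jd := by
      rw [EuclideanSpace.norm_eq]
      have h1 : (∑ t, ‖(EuclideanSpace.equiv (Fin n) ℝ).symm (A.mulVec v) t‖ ^ 2)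
          = S i jd ^ 2 * (Uᵀ * U) i i := by
        rw [Matrix.mul_apply, Finset.mul_sum]
        refine Finset.sum_congr rfl fun t _ => ?_
        have h2 : (EuclideanSpace.equiv (Fin n) ℝ).symm (A.mulVec v) t = U t i * S i jd := by
          show A.mulVec v t = U t i * S i jd
          rw [hAv]
        rw [h2, Matrix.transpose_apply, Real.norm_eq_abs, sq_abs]
        ring
      rw [h1, hUo, Matrix.one_apply_eq, mul_one, Real.sqrt_sq (le_of_lt (hSpos i))]
    have hle := l2OpNorm_mulVec_le A v
    rw [hnAv, hnv, mul_one] at hle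
    exact hle
  -- eigenvalues below n are < 1 in absolute value
  have hlam : ∀ j : Fin d, (j : ℕ) < n → |lam j| < 1 := by
    intro j hj
    have hgj : g j = S ⟨(j : ℕ), hj⟩ j ^ 2 := by
      rw [hg]; dsimp only; rw [dif_pos hj]
    have hpos : 0 < S ⟨(j : ℕ), hj⟩ j := by
      have h := hSpos ⟨(j : ℕ), hj⟩
      convert h using 2
    have h0 : 0 < g j := by rw [hgj]; positivity
    have hσ : S ⟨(j : ℕ), hj⟩ j ≤ l2OpNorm A := by
      have h := hσle ⟨(j : ℕ), hj⟩
      convert h using 2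
    have hle2 : g j ≤ l2OpNorm A ^ 2 := by
      rw [hgj]
      exact pow_le_pow_left₀ (le_of_lt hpos) hσ 2
    have h2 : α * g j < 2 :=
      lt_of_le_of_lt (mul_le_mul_of_nonneg_left hle2 (le_of_lt hα)) hstepsize
    have h1 : 0 < α * g j := mul_pos hα h0
    have hlj : lam j = 1 - α * g j := by rw [hlamdef]
    rw [hlj, abs_lt]
    constructor <;> linarith
  -- conclude
  have key : Tendsto (fun k => (P ^ k).mulVec w) atTop (nhds 0) := by
    rw [tendsto_pi_nhds]
    intro i
    have hform : ∀ k, (P ^ k).mulVec w i = ∑ j, V i j * (lam j ^ k * z j) := by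
      intro k
      have h1 : (P ^ k).mulVec w = V.mulVec ((diagonal fun j => lam j ^ k).mulVec z) := by
        rw [hz, Matrix.mulVec_mulVec, Matrix.mulVec_mulVec, hPk k]
      rw [h1]
      have h2 : (diagonal fun j => lam j ^ k).mulVec z = fun j => lam j ^ k * z j :=
        funext fun j => Matrix.mulVec_diagonal _ _ _
      rw [h2]
      simp only [Matrix.mulVec, dotProduct]
    have hsum : Tendsto (fun k => ∑ j, V i j * (lam j ^ k * z j)) atTop (nhds 0) := by
      have h0 : (0 : ℝ) = ∑ j : Fin d, 0 := by simp
      rw [h0]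
      apply tendsto_finset_sum
      intro j _
      by_cases hj : (j : ℕ) < n
      · have h := (tendsto_pow_atTop_nhds_zero_of_abs_lt_one (hlam j hj)).const_mul
          (V i j * z j)
        have heq : (fun k : ℕ => V i j * z j * lam j ^ k)
            = fun k => V i j * (lam j ^ k * z j) := by
          funext k; ring
        rw [heq] at h
        simpa using h
      · have hz0 : z j = 0 := hztail j (le_of_not_gt hj)
        simp [hz0]
    have heq2 : (fun k => (P ^ k).mulVec w i) = fun k => ∑ j, V i j * (lam j ^ k * z j) :=
      funext hform
    rw [Pi.zero_apply, heq2]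
    exact hsum
  have final := key.add_const L
  rw [zero_add] at final
  have hy : y = fun k => (P ^ k).mulVec w + L := funext hclosed
  rw [hy]
  exact final
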